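/- arXiv:math/0701545 — 3 statements merged into one kernel-verified Lean document; each statement's English description precedes it below -/
import Mathlib

section
/- Let p be a positive integer and λ ∈ X^+(n) a p-restricted big weight, with i and j its smallest and largest removable rows, N = i − j − λ_i + λ_{j+1} + p + 1 and a = j + λ_i − λ_{j+1} − p − 1. Then the indices are in range (1 ≤ a+1, a+N = i, and j+N ≤ n, with the two ranges {a+1,…,i} and {j+1,…,j+N} disjoint and N ≥ 1), and the resulting n-tuple hat λ is weakly decreasing, i.e. hat λ ∈ X^+(n). -/
/-- `l` (one-based, entries `l 1, …, l n`) is a dominant weight of `X⁺(n)`: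
weakly decreasing on positions `1, …, n`. -/
def Dominant (n : ℕ) (l : ℕ → ℤ) : Prop :=
  ∀ i : ℕ, 1 ≤ i → i < n → l (i + 1) ≤ l i

/-- Row `i` is removable for `l ∈ X⁺(n)`: `1 ≤ i < n` and `l i > l (i+1)`. -/
def Removable (n : ℕ) (l : ℕ → ℤ) (i : ℕ) : Prop :=
  1 ≤ i ∧ i < n ∧ l (i + 1) < l i

/-- `l ∈ X⁺(n)` is `p`-restricted: `l i - l (i+1) < p` for `1 ≤ i < n`. -/
def PRestricted (p n : ℕ) (l : ℕ → ℤ) : Prop :=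
  ∀ i : ℕ, 1 ≤ i → i < n → l i - l (i + 1) < (p : ℤ)

/-- `i` is the smallest removable row of `l`. -/
def IsSmallestRemovable (n : ℕ) (l : ℕ → ℤ) (i : ℕ) : Prop :=
  Removable n l i ∧ ∀ k : ℕ, Removable n l k → i ≤ k

/-- `j` is the largest removable row of `l`. -/
def IsLargestRemovable (n : ℕ) (l : ℕ → ℤ) (j : ℕ) : Prop :=
  Removable n l j ∧ ∀ k : ℕ, Removable n l k → k ≤ j

open Classical in
/-- `ψ_n(l) = j - i + l i - l (j+1)` where `i`, `j` are the smallest and largest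
removable rows of `l`; and `ψ_n(l) = 0` if `l` has no removable row. -/
noncomputable def psi (n : ℕ) (l : ℕ → ℤ) : ℤ :=
  if h : ∃ i : ℕ, Removable n l i then
    (Nat.findGreatest (Removable n l) n : ℤ) - (Nat.find h : ℤ)
      + l (Nat.find h) - l (Nat.findGreatest (Removable n l) n + 1)
  else 0

/-- A `p`-restricted `l ∈ X⁺(n)` is big: it has a removable row and, with `i`, `j` the
smallest and largest removable rows, (1) `j - i + l i - l (j+1) ≤ p`;
(2) `l i - l (j+1) > 1`, `j - 1 + l i - l (j+1) ≥ p`, `i - l i + l (j+1) + p + 1 ≤ n`. -/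
def Big (p n : ℕ) (l : ℕ → ℤ) : Prop :=
  ∃ i j : ℕ, IsSmallestRemovable n l i ∧ IsLargestRemovable n l j ∧
    (j : ℤ) - (i : ℤ) + l i - l (j + 1) ≤ (p : ℤ) ∧
    1 < l i - l (j + 1) ∧
    (p : ℤ) ≤ (j : ℤ) - 1 + l i - l (j + 1) ∧
    (i : ℤ) - l i + l (j + 1) + (p : ℤ) + 1 ≤ (n : ℤ)

/-- For big `l` with smallest and largest removable rows `i`, `j`, setting
`a = j + l i - l (j+1) - p - 1` and `N = i - j - l i + l (j+1) + p + 1`, the weight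
`hat l` is obtained from `l` by decreasing rows `a+1, …, a+N` by `1` and increasing
rows `j+1, …, j+N` by `1`. -/
def hatl (p : ℕ) (l : ℕ → ℤ) (i j : ℕ) (k : ℕ) : ℤ :=
  l k
    - (if (j : ℤ) + l i - l (j + 1) - (p : ℤ) - 1 + 1 ≤ (k : ℤ) ∧
          (k : ℤ) ≤ (j : ℤ) + l i - l (j + 1) - (p : ℤ) - 1 +
            ((i : ℤ) - (j : ℤ) - l i + l (j + 1) + (p : ℤ) + 1) then 1 else 0)
    + (if (j : ℤ) + 1 ≤ (k : ℤ) ∧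
          (k : ℤ) ≤ (j : ℤ) + ((i : ℤ) - (j : ℤ) - l i + l (j + 1) + (p : ℤ) + 1)
        then 1 else 0)

/-- For a `p`-restricted big weight `l ∈ X⁺(n)` with smallest and largest
removable rows `i`, `j`, put `N = i - j - l i + l (j+1) + p + 1` and
`a = j + l i - l (j+1) - p - 1`.  Then the indices are in range
(`1 ≤ a + 1`, `a + N = i`, `j + N ≤ n`, the ranges `{a+1, …, i}` and `{j+1, …, j+N}` are
disjoint, and `N ≥ 1`), and `hat l` is weakly decreasing, i.e. `hat l ∈ X⁺(n)`. -/
theorem stmt1 (p n : ℕ) (hp : 1 ≤ p) (l : ℕ → ℤ)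
    (hdom : Dominant n l) (hres : PRestricted p n l) (hbig : Big p n l) :
    ∀ i j : ℕ, IsSmallestRemovable n l i → IsLargestRemovable n l j →
      let a : ℤ := (j : ℤ) + l i - l (j + 1) - (p : ℤ) - 1
      let N : ℤ := (i : ℤ) - (j : ℤ) - l i + l (j + 1) + (p : ℤ) + 1
      1 ≤ a + 1 ∧
      a + N = (i : ℤ) ∧
      (j : ℤ) + N ≤ (n : ℤ) ∧
      Disjoint (Set.Icc (a + 1) (a + N)) (Set.Icc ((j : ℤ) + 1) ((j : ℤ) + N)) ∧
      1 ≤ N ∧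
      Dominant n (hatl p l i j) := by
  intro i j hsi hlj
  obtain ⟨i', j', hsi', hlj', hA, hB, hC, hD⟩ := hbig
  have hi : i = i' := le_antisymm (hsi.2 i' hsi'.1) (hsi'.2 i hsi.1)
  have hj : j = j' := le_antisymm (hlj'.2 j hlj.1) (hlj.2 j' hlj'.1)
  subst hi; subst hj
  have hij : i ≤ j := hsi.2 j hlj.1
  obtain ⟨hi1, hin, hilt⟩ := hsi.1
  obtain ⟨hj1, hjn, hjlt⟩ := hlj.1
  dsimp only
  refine ⟨by omega, by ring, by omega, ?_, by omega, ?_⟩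
  · rw [Set.disjoint_left]
    rintro x ⟨hx1, hx2⟩ ⟨hx3, hx4⟩
    omega
  · intro k hk1 hkn
    have hdk := hdom k hk1 hkn
    show hatl p l i j (k+1) ≤ hatl p l i j k
    by_cases hki : k = i
    · subst hki
      by_cases hkj : k = j
      · subst hkj
        unfold hatl; push_cast; split_ifs <;> omega
      · unfold hatl; push_cast; split_ifs <;> omega
    · by_cases hkj : k = j
      · subst hkj
        unfold hatl; push_cast; split_ifs <;> omega
      · unfold hatl; push_cast; split_ifs <;> omega
end

section
/- Let p be a positive integer and λ ∈ X^+(n) a p-restricted big weight. Then hat λ < λ in the dominance order on n-tuples of integers; in particular Σ_{k=1}^n (hat λ)_k = Σ_{k=1}^n λ_k, Σ_{k=1}^r (hat λ)_k ≤ Σ_{k=1}^r λ_k for every 1 ≤ r ≤ n, and hat λ ≠ λ. -/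
lemma sum_ind (a b : ℤ) (ha : 0 ≤ a) (r : ℕ) :
    ∑ k ∈ Finset.Icc 1 r, (if a + 1 ≤ (k : ℤ) ∧ (k : ℤ) ≤ b then (1 : ℤ) else 0)
      = max 0 (min (r : ℤ) b - a) := by
  induction r with
  | zero => simp; omega
  | succ r ih =>
      rw [Finset.sum_Icc_succ_top (by omega), ih]
      push_cast
      split_ifs with h <;> omega

/-- For a `p`-restricted big weight `l ∈ X⁺(n)`, we have `hat l < l` in the
dominance order: the total sums over `1, …, n` agree, all partial sums of `hat l` are at
most those of `l`, and `hat l ≠ l` (on positions `1, …, n`). -/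
theorem stmt2 (p n : ℕ) (hp : 1 ≤ p) (l : ℕ → ℤ)
    (hdom : Dominant n l) (hres : PRestricted p n l) (hbig : Big p n l) :
    ∀ i j : ℕ, IsSmallestRemovable n l i → IsLargestRemovable n l j →
      (∑ k ∈ Finset.Icc 1 n, hatl p l i j k = ∑ k ∈ Finset.Icc 1 n, l k) ∧
      (∀ r : ℕ, 1 ≤ r → r ≤ n →
        ∑ k ∈ Finset.Icc 1 r, hatl p l i j k ≤ ∑ k ∈ Finset.Icc 1 r, l k) ∧
      (∃ k : ℕ, 1 ≤ k ∧ k ≤ n ∧ hatl p l i j k ≠ l k) := by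
  intro i j hi hj
  obtain ⟨i', j', hi', hj', h1, h2, h3, h4⟩ := hbig
  have hii : i' = i := le_antisymm (hi'.2 _ hi.1) (hi.2 _ hi'.1)
  have hjj : j' = j := le_antisymm (hj.2 _ hj'.1) (hj'.2 _ hj.1)
  rw [hii, hjj] at h1 h2 h3 h4
  have hi1 : 1 ≤ i := hi.1.1
  have hin : i < n := hi.1.2.1
  have hij : i ≤ j := hi.2 j hj.1
  have hA : (0 : ℤ) ≤ (j : ℤ) + l i - l (j + 1) - (p : ℤ) - 1 := by omega
  have hj0 : (0 : ℤ) ≤ (j : ℤ) := by positivity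
  have hsum : ∀ r : ℕ, ∑ k ∈ Finset.Icc 1 r, hatl p l i j k
      = (∑ k ∈ Finset.Icc 1 r, l k)
        - max 0 (min (r : ℤ) ((j : ℤ) + l i - l (j + 1) - (p : ℤ) - 1 +
            ((i : ℤ) - (j : ℤ) - l i + l (j + 1) + (p : ℤ) + 1))
            - ((j : ℤ) + l i - l (j + 1) - (p : ℤ) - 1))
        + max 0 (min (r : ℤ) ((j : ℤ) +
            ((i : ℤ) - (j : ℤ) - l i + l (j + 1) + (p : ℤ) + 1)) - (j : ℤ)) := by
    intro r
    unfold hatl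
    rw [Finset.sum_add_distrib, Finset.sum_sub_distrib, sum_ind _ _ hA, sum_ind _ _ hj0]
  refine ⟨?_, ?_, ?_⟩
  · rw [hsum n]; omega
  · intro r hr1 hrn; rw [hsum r]; omega
  · refine ⟨i, hi1, le_of_lt hin, ?_⟩
    unfold hatl
    split_ifs <;> omega
end

section
/- Let p be a positive integer and λ ∈ X^+(n) a p-restricted weight with ψ_n(λ) ≤ p and λ_n = 0, and suppose λ is NOT big. Put m = Σ_{k=1}^n λ_k and ν = (λ_1,…,λ_n, 0^m) ∈ X^+(n+m). Then either ν is not big, or ν is big and (hat ν)_{n+1} > 0. -/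
/-- Let `p ≥ 1` and `l ∈ X⁺(n)` a `p`-restricted weight with
`ψ_n(l) ≤ p` and `l n = 0`, and suppose `l` is NOT big.  Put `m = l 1 + ⋯ + l n` and
`ν = (l 1, …, l n, 0^m) ∈ X⁺(n+m)`.  Then either `ν` is not big, or `ν` is big and
`(hat ν)_{n+1} > 0`. -/
theorem stmt9 (p n : ℕ) (hp : 1 ≤ p) (hn : 1 ≤ n) (l : ℕ → ℤ)
    (hdom : Dominant n l) (hlast : l n = 0)
    (hres : PRestricted p n l) (hpsi : psi n l ≤ (p : ℤ))
    (hnotbig : ¬ Big p n l)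
    (m : ℕ) (hm : (m : ℤ) = ∑ k ∈ Finset.Icc 1 n, l k)
    (ν : ℕ → ℤ) (hν : ∀ k : ℕ, ν k = if k ≤ n then l k else 0) :
    ¬ Big p (n + m) ν ∨
    (Big p (n + m) ν ∧
      ∀ i j : ℕ, IsSmallestRemovable (n + m) ν i → IsLargestRemovable (n + m) ν j →
        0 < hatl p ν i j (n + 1)) := by
  by_cases hB : Big p (n + m) ν
  · right
    refine ⟨hB, ?_⟩
    intro i j hsi hlj
    obtain ⟨i0, j0, hsi0, hlj0, c1, c2, c3, c4⟩ := hB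
    have hii : i = i0 := le_antisymm (hsi.2 _ hsi0.1) (hsi0.2 _ hsi.1)
    have hjj : j = j0 := le_antisymm (hlj0.2 _ hlj.1) (hlj.2 _ hlj0.1)
    subst hii; subst hjj
    have hrem : ∀ k, Removable (n + m) ν k ↔ Removable n l k := by
      intro k
      constructor
      · rintro ⟨h1, h2, h3⟩
        have hkn : k < n := by
          by_contra hk
          push_neg at hk
          have hν1 : ν (k + 1) = 0 := by rw [hν]; rw [if_neg (by omega)]
          have hνk : ν k = 0 := by
            rw [hν]
            by_cases h : k ≤ n
            · have hkn' : k = n := le_antisymm h hk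
              rw [if_pos h, hkn', hlast]
            · rw [if_neg h]
          omega
        refine ⟨h1, hkn, ?_⟩
        rwa [hν k, hν (k + 1), if_pos (by omega), if_pos (by omega)] at h3
      · rintro ⟨h1, h2, h3⟩
        refine ⟨h1, by omega, ?_⟩
        rw [hν k, hν (k + 1), if_pos (by omega), if_pos (by omega)]
        exact h3
    have hi : Removable n l i := (hrem i).1 hsi.1
    have hj : Removable n l j := (hrem j).1 hlj.1
    have hin : i < n := hi.2.1
    have hjn : j < n := hj.2.1
    have νi : ν i = l i := by rw [hν, if_pos (by omega)]
    have νj1 : ν (j + 1) = l (j + 1) := by rw [hν, if_pos (by omega)]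
    have νn1 : ν (n + 1) = 0 := by rw [hν, if_neg (by omega)]
    rw [νi, νj1] at c1 c2 c3 c4
    have hkey : (n : ℤ) < (i : ℤ) - l i + l (j + 1) + (p : ℤ) + 1 := by
      by_contra hc
      push_neg at hc
      exact hnotbig ⟨i, j, ⟨hi, fun k hk => hsi.2 k ((hrem k).2 hk)⟩,
        ⟨hj, fun k hk => hlj.2 k ((hrem k).2 hk)⟩, c1, c2, c3, hc⟩
    unfold hatl
    rw [νi, νj1, νn1, if_neg (by push_cast; omega), if_pos (by push_cast; omega)]
    norm_num
  · exact Or.inl hB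
end
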